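/- The free-space Rotne–Prager–Yamakawa bi-Laplacian term vanishes: for x ≠ y, Δ_x Δ_y [J(x,y)f] = 0 for any constant f ∈ ℝ³, so the RPY velocity (1 + (a²/6)Δ_x)(1 + (b²/6)Δ_y)J(x,y)f equals J(x,y)f + ((a²+b²)/6)Δ_x J(x,y)f. -/

import Mathlib

noncomputable section
open scoped Real

/-- Points in ℝ³ with the Euclidean norm. -/
abbrev E3 := EuclideanSpace ℝ (Fin 3)

/-- Build a point of ℝ³ from three coordinates. -/
def mk3 (a b c : ℝ) : E3 := (WithLp.equiv 2 (Fin 3 → ℝ)).symm ![a, b, c]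

/-- Partial derivative in the i-th coordinate direction. -/
def pd (i : Fin 3) (f : E3 → ℝ) (x : E3) : ℝ :=
  fderiv ℝ f x (EuclideanSpace.single i 1)

/-- Laplacian. -/
def lap (f : E3 → ℝ) (x : E3) : ℝ := ∑ i : Fin 3, pd i (pd i f) x

/-- Laplace monopole kernel G^S(x,y) = 1/(4π‖x−y‖). -/
def GS (x y : E3) : ℝ := 1 / (4 * Real.pi * ‖x - y‖)

/-- Laplace dipole kernel G^D(x,y) = (x−y)/(4π‖x−y‖³), j-th component. -/
def GD (x y : E3) (j : Fin 3) : ℝ := (x j - y j) / (4 * Real.pi * ‖x - y‖ ^ 3)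

/-- Stokeslet (unit viscosity), (i,j) entry. -/
def J (x y : E3) (i j : Fin 3) : ℝ :=
  (1 / (8 * Real.pi)) *
    ((if i = j then (1 : ℝ) else 0) / ‖x - y‖ +
      (x i - y i) * (x j - y j) / ‖x - y‖ ^ 3)

/-- Q(x,y) = ∇ₓ G^D(x,y), entries Q_{ij} = ∂_{x_i} G^D_j. -/
def Q (x y : E3) (i j : Fin 3) : ℝ := pd i (fun x => GD x y j) x

/-- Image point below the wall x₃ = 0. -/
def yI (y : E3) : E3 := mk3 (y 0) (y 1) (-(y 2))

/-- Image force. -/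
def fI (f : Fin 3 → ℝ) : Fin 3 → ℝ := ![f 0, f 1, -(f 2)]

namespace RPY

def s (y x : E3) : ℝ := (x 0 - y 0)^2 + (x 1 - y 1)^2 + (x 2 - y 2)^2

lemma s_eq (y x : E3) : s y x = ‖x - y‖ ^ 2 := by
  rw [EuclideanSpace.norm_eq, Real.sq_sqrt (by positivity)]
  simp [s, Fin.sum_univ_three]

lemma norm_pos' {y x : E3} (h : x ≠ y) : (0:ℝ) < ‖x - y‖ :=
  norm_pos_iff.2 (sub_ne_zero.2 h)

lemma s_pos {y x : E3} (h : x ≠ y) : 0 < s y x := by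
  rw [s_eq]; exact pow_pos (norm_pos' h) 2

def P (i : Fin 3) : E3 →L[ℝ] ℝ := EuclideanSpace.proj i

lemma npow {f : E3 → ℝ} {f' : E3 →L[ℝ] ℝ} {x : E3} (hf : HasFDerivAt f f' x) (n : ℕ) :
    HasFDerivAt (fun x => f x ^ n) (((n:ℝ) * f x ^ (n-1)) • f') x :=
  (hasDerivAt_pow n (f x)).comp_hasFDerivAt x hf

lemma hasF_coord (y : E3) (x : E3) (j : Fin 3) :
    HasFDerivAt (fun x : E3 => x j - y j) (P j) x := by
  exact (P j).hasFDerivAt.sub_const (y j)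

lemma hasF_s (y x : E3) :
    HasFDerivAt (s y) ((2*(x 0 - y 0)) • P 0 + (2*(x 1 - y 1)) • P 1 + (2*(x 2 - y 2)) • P 2) x := by
  have h := ((npow (hasF_coord y x 0) 2).add (npow (hasF_coord y x 1) 2)).add
    (npow (hasF_coord y x 2) 2)
  refine h.congr_fderiv ?_
  ext v
  simp
  try ring

lemma hasF_norm (y x : E3) (hx : x ≠ y) :
    HasFDerivAt (fun x : E3 => ‖x - y‖)
      ((1 / (2 * ‖x - y‖)) • ((2*(x 0 - y 0)) • P 0 + (2*(x 1 - y 1)) • P 1 + (2*(x 2 - y 2)) • P 2)) x := by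
  have h : HasFDerivAt (fun x : E3 => Real.sqrt (s y x)) _ x :=
    (hasF_s y x).sqrt (ne_of_gt (s_pos hx))
  have he : (fun x : E3 => Real.sqrt (s y x)) = fun x : E3 => ‖x - y‖ := by
    funext z; rw [s_eq, Real.sqrt_sq (norm_nonneg _)]
  rw [he] at h
  refine h.congr_fderiv ?_
  rw [s_eq, Real.sqrt_sq (norm_nonneg _)]

structure Tm where
  c : ℤ
  a : ℕ
  b : ℕ
  d : ℕ
  m : ℕ
deriving DecidableEq, Repr

def ev (t : Tm) (y x : E3) : ℝ :=
  (t.c : ℝ) * ((x 0 - y 0)^t.a * (x 1 - y 1)^t.b * (x 2 - y 2)^t.d) / (‖x - y‖ * s y x ^ t.m)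

def evL (L : List Tm) (y x : E3) : ℝ := (L.map (fun t => ev t y x)).sum

def D : Fin 3 → Tm → List Tm
  | 0, t => (if t.a = 0 then [] else [⟨t.c * t.a, t.a - 1, t.b, t.d, t.m⟩]) ++ [⟨-(2*t.m+1) * t.c, t.a + 1, t.b, t.d, t.m + 1⟩]
  | 1, t => (if t.b = 0 then [] else [⟨t.c * t.b, t.a, t.b - 1, t.d, t.m⟩]) ++ [⟨-(2*t.m+1) * t.c, t.a, t.b + 1, t.d, t.m + 1⟩]
  | 2, t => (if t.d = 0 then [] else [⟨t.c * t.d, t.a, t.b, t.d - 1, t.m⟩]) ++ [⟨-(2*t.m+1) * t.c, t.a, t.b, t.d + 1, t.m + 1⟩]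

set_option maxHeartbeats 1000000 in
lemma hasF_ev (t : Tm) (y x : E3) (hx : x ≠ y) :
    HasFDerivAt (ev t y)
      ((evL (D 0 t) y x) • P 0 + (evL (D 1 t) y x) • P 1 + (evL (D 2 t) y x) • P 2) x := by
  have hr := norm_pos' hx
  have hs := s_pos hx
  have hmono := ((npow (hasF_coord y x 0) t.a).fun_mul (npow (hasF_coord y x 1) t.b)).fun_mul
      (npow (hasF_coord y x 2) t.d)
  have hden := (hasF_norm y x hx).fun_mul (npow (hasF_s y x) t.m)
  have hne : ‖x - y‖ * s y x ^ t.m ≠ 0 := by positivity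
  have hinv := (hasDerivAt_inv hne).comp_hasFDerivAt x hden
  have h := ((hmono.const_mul (t.c : ℝ)).fun_mul hinv)
  have he : (fun x => (t.c:ℝ) * ((x 0 - y 0)^t.a * (x 1 - y 1)^t.b * (x 2 - y 2)^t.d) *
      (‖x - y‖ * s y x ^ t.m)⁻¹) = ev t y := by
    funext z; rw [ev, div_eq_mul_inv]
  simp only [Function.comp_def] at h
  rw [he] at h
  refine h.congr_fderiv ?_
  ext v
  obtain ⟨c, a, b, d, m⟩ := t
  rw [s_eq] at *
  rcases a with _ | a <;> rcases b with _ | b <;> rcases d with _ | d <;> rcases m with _ | m <;>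
    · simp only [evL, D, ev, List.map, List.append_nil, List.nil_append, List.cons_append,
        List.sum_cons, List.sum_nil, add_zero, if_pos, if_neg, Nat.succ_ne_zero,
        reduceIte, Nat.add_sub_cancel, Nat.sub_zero,
        ContinuousLinearMap.add_apply, ContinuousLinearMap.smul_apply,
        ContinuousLinearMap.coe_smul', Pi.smul_apply, smul_eq_mul, s_eq]
      push_cast
      field_simp
      ring

lemma diff_ev (t : Tm) (y : E3) {x : E3} (hx : x ≠ y) : DifferentiableAt ℝ (ev t y) x :=
  (hasF_ev t y x hx).differentiableAt

lemma pd_ev (t : Tm) (y : E3) {x : E3} (hx : x ≠ y) (i : Fin 3) :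
    pd i (ev t y) x = evL (D i t) y x := by
  rw [pd, (hasF_ev t y x hx).fderiv]
  fin_cases i <;> simp [P, EuclideanSpace.single_apply]

lemma evL_nil (y x : E3) : evL [] y x = 0 := rfl
lemma evL_cons (t : Tm) (L : List Tm) (y x : E3) :
    evL (t :: L) y x = ev t y x + evL L y x := by simp [evL]
lemma evL_append (A B : List Tm) (y x : E3) :
    evL (A ++ B) y x = evL A y x + evL B y x := by simp [evL]

lemma diff_evL (L : List Tm) (y : E3) {x : E3} (hx : x ≠ y) :
    DifferentiableAt ℝ (evL L y) x := by
  induction L with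
  | nil =>
      have : evL [] y = fun _ => (0:ℝ) := rfl
      rw [this]; exact differentiableAt_const 0
  | cons t L ih =>
      have : evL (t :: L) y = fun x => ev t y x + evL L y x := by
        funext z; simp [evL]
      rw [this]
      exact (diff_ev t y hx).add ih

def DL (i : Fin 3) (L : List Tm) : List Tm := L.flatMap (D i)

lemma pd_add (f g : E3 → ℝ) (x : E3) (i : Fin 3) (hf : DifferentiableAt ℝ f x)
    (hg : DifferentiableAt ℝ g x) :
    pd i (fun x => f x + g x) x = pd i f x + pd i g x := by
  simp [pd, fderiv_fun_add hf hg]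

lemma pd_evL (L : List Tm) (y : E3) {x : E3} (hx : x ≠ y) (i : Fin 3) :
    pd i (evL L y) x = evL (DL i L) y x := by
  induction L with
  | nil =>
      have h0 : evL ([] : List Tm) y = fun _ => (0:ℝ) := rfl
      have h1 : DL i [] = [] := rfl
      rw [h0, h1]
      simp [pd, evL]
  | cons t L ih =>
      have h1 : evL (t :: L) y = fun x => ev t y x + evL L y x := by
        funext z; simp [evL]
      rw [h1, pd_add _ _ _ _ (diff_ev t y hx) (diff_evL L y hx)]
      have h2 : DL i (t :: L) = D i t ++ DL i L := by simp [DL]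
      rw [h2, evL_append, pd_ev t y hx i, ih]

lemma pd_congr {f g : E3 → ℝ} {x : E3} (h : f =ᶠ[nhds x] g) (i : Fin 3) :
    pd i f x = pd i g x := by
  simp [pd, h.fderiv_eq]

lemma lap_congr {f g : E3 → ℝ} {x : E3} (h : f =ᶠ[nhds x] g) :
    lap f x = lap g x := by
  rw [lap, lap]
  refine Finset.sum_congr rfl (fun i _ => ?_)
  exact pd_congr (h.eventually_nhds.mono (fun z hz => pd_congr hz i)) i

lemma eventually_ne (y : E3) {x : E3} (hx : x ≠ y) : ∀ᶠ z in nhds x, z ≠ y :=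
  eventually_ne_nhds hx

def lapL (L : List Tm) : List Tm := DL 0 (DL 0 L) ++ (DL 1 (DL 1 L) ++ DL 2 (DL 2 L))

def flipT (t : Tm) : Tm := ⟨(-1)^(t.a+t.b+t.d) * t.c, t.a, t.b, t.d, t.m⟩
def flipL (L : List Tm) : List Tm := L.map flipT

lemma s_symm (y x : E3) : s y x = s x y := by simp [s]; ring

lemma ev_flip (t : Tm) (y x : E3) : ev t y x = ev (flipT t) x y := by
  obtain ⟨c, a, b, d, m⟩ := t
  simp only [ev, flipT, s_symm y x, norm_sub_rev x y]
  have h1 : ∀ (A B : ℝ) (n : ℕ), (A - B)^n = (-1)^n * (B - A)^n := by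
    intro A B n; rw [show A - B = -(B - A) by ring, neg_pow]
  rw [h1 (x 0) (y 0), h1 (x 1) (y 1), h1 (x 2) (y 2)]
  push_cast
  ring

lemma evL_flip (L : List Tm) (y x : E3) : evL L y x = evL (flipL L) x y := by
  induction L with
  | nil => rfl
  | cons t L ih =>
      rw [show flipL (t :: L) = flipT t :: flipL L from rfl, evL_cons, evL_cons, ih, ev_flip]

lemma pd_cmul (c : ℝ) (f : E3 → ℝ) (x : E3) (i : Fin 3) (hf : DifferentiableAt ℝ f x) :
    pd i (fun x => c * f x) x = c * pd i f x := by
  simp [pd, fderiv_const_mul hf]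

lemma diff_comb (c0 c1 c2 : ℝ) (L0 L1 L2 : List Tm) (y : E3) {x : E3} (hx : x ≠ y) :
    DifferentiableAt ℝ (fun x => c0 * evL L0 y x + c1 * evL L1 y x + c2 * evL L2 y x) x :=
  (((diff_evL L0 y hx).const_mul _).add ((diff_evL L1 y hx).const_mul _)).add
    ((diff_evL L2 y hx).const_mul _)

lemma pd_comb (c0 c1 c2 : ℝ) (L0 L1 L2 : List Tm) (y : E3) {x : E3} (hx : x ≠ y) (i : Fin 3) :
    pd i (fun x => c0 * evL L0 y x + c1 * evL L1 y x + c2 * evL L2 y x) x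
      = c0 * evL (DL i L0) y x + c1 * evL (DL i L1) y x + c2 * evL (DL i L2) y x := by
  rw [pd_add _ _ _ _ (((diff_evL L0 y hx).const_mul _).fun_add ((diff_evL L1 y hx).const_mul _))
    ((diff_evL L2 y hx).const_mul _),
    pd_add _ _ _ _ ((diff_evL L0 y hx).const_mul _) ((diff_evL L1 y hx).const_mul _),
    pd_cmul _ _ _ _ (diff_evL L0 y hx), pd_cmul _ _ _ _ (diff_evL L1 y hx),
    pd_cmul _ _ _ _ (diff_evL L2 y hx), pd_evL _ y hx, pd_evL _ y hx, pd_evL _ y hx]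

lemma lap_comb (c0 c1 c2 : ℝ) (L0 L1 L2 : List Tm) (y : E3) {x : E3} (hx : x ≠ y) :
    lap (fun x => c0 * evL L0 y x + c1 * evL L1 y x + c2 * evL L2 y x) x
      = c0 * evL (lapL L0) y x + c1 * evL (lapL L1) y x + c2 * evL (lapL L2) y x := by
  have key : ∀ i : Fin 3, pd i (pd i (fun x => c0 * evL L0 y x + c1 * evL L1 y x + c2 * evL L2 y x)) x
      = c0 * evL (DL i (DL i L0)) y x + c1 * evL (DL i (DL i L1)) y x + c2 * evL (DL i (DL i L2)) y x := by
    intro i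
    have h1 : pd i (fun x => c0 * evL L0 y x + c1 * evL L1 y x + c2 * evL L2 y x)
        =ᶠ[nhds x] (fun x => c0 * evL (DL i L0) y x + c1 * evL (DL i L1) y x + c2 * evL (DL i L2) y x) :=
      (eventually_ne y hx).mono (fun z hz => pd_comb c0 c1 c2 L0 L1 L2 y hz i)
    rw [pd_congr h1 i, pd_comb c0 c1 c2 _ _ _ y hx i]
  rw [lap, Fin.sum_univ_three, key 0, key 1, key 2]
  simp only [lapL, evL_append]
  ring


structure PTm where
  c : ℤ
  a : ℕ
  b : ℕ
  d : ℕ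
deriving DecidableEq, Repr

def pev (p : PTm) (y x : E3) : ℝ :=
  (p.c : ℝ) * ((x 0 - y 0)^p.a * (x 1 - y 1)^p.b * (x 2 - y 2)^p.d)

def Pev (P : List PTm) (y x : E3) : ℝ := (P.map (fun p => pev p y x)).sum

lemma Pev_nil (y x : E3) : Pev [] y x = 0 := rfl
lemma Pev_cons (p : PTm) (P : List PTm) (y x : E3) :
    Pev (p :: P) y x = pev p y x + Pev P y x := by simp [Pev]
lemma Pev_append (A B : List PTm) (y x : E3) :
    Pev (A ++ B) y x = Pev A y x + Pev B y x := by simp [Pev]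

def key (p : PTm) : ℕ := (p.a * 100 + p.b) * 100 + p.d

def insertP (p : PTm) : List PTm → List PTm
  | [] => [p]
  | q :: Q =>
    if p.a = q.a ∧ p.b = q.b ∧ p.d = q.d then ⟨p.c + q.c, q.a, q.b, q.d⟩ :: Q
    else if key p ≤ key q then p :: q :: Q
    else q :: insertP p Q

def normP : List PTm → List PTm
  | [] => []
  | p :: P => insertP p (normP P)

def pruneP (P : List PTm) : List PTm := P.filter (fun p => decide (p.c ≠ 0))

def smulS (P : List PTm) : List PTm :=
  P.flatMap (fun p => [⟨p.c, p.a + 2, p.b, p.d⟩, ⟨p.c, p.a, p.b + 2, p.d⟩, ⟨p.c, p.a, p.b, p.d + 2⟩])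

def toPoly (M : ℕ) (t : Tm) : List PTm := smulS^[M - t.m] [⟨t.c, t.a, t.b, t.d⟩]
def toP (M : ℕ) (L : List Tm) : List PTm := L.flatMap (toPoly M)
def nf (M : ℕ) (L : List Tm) : List PTm := pruneP (normP (toP M L))

lemma Pev_insertP (p : PTm) (P : List PTm) (y x : E3) :
    Pev (insertP p P) y x = pev p y x + Pev P y x := by
  induction P with
  | nil => simp [insertP, Pev]
  | cons q Q ih =>
      rw [insertP]
      split_ifs with h1 h2
      · obtain ⟨ha, hb, hd⟩ := h1
        rw [Pev_cons, Pev_cons]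
        have : pev ⟨p.c + q.c, q.a, q.b, q.d⟩ y x = pev p y x + pev q y x := by
          simp only [pev, ← ha, ← hb, ← hd]
          push_cast
          ring
        rw [this]; ring
      · rw [Pev_cons, Pev_cons]
      · rw [Pev_cons, ih, Pev_cons]; ring

lemma Pev_normP (P : List PTm) (y x : E3) : Pev (normP P) y x = Pev P y x := by
  induction P with
  | nil => rfl
  | cons p P ih => rw [normP, Pev_insertP, ih, Pev_cons]

lemma Pev_pruneP (P : List PTm) (y x : E3) : Pev (pruneP P) y x = Pev P y x := by
  induction P with
  | nil => rfl
  | cons p P ih =>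
      rw [Pev_cons, ← ih, pruneP, List.filter_cons]
      rcases eq_or_ne p.c 0 with h | h
      · have hp : pev p y x = 0 := by simp [pev, h]
        simp [h, hp, pruneP]
      · simp [h, Pev_cons, pruneP]

lemma Pev_smulS (P : List PTm) (y x : E3) : Pev (smulS P) y x = s y x * Pev P y x := by
  induction P with
  | nil => simp [smulS, Pev]
  | cons p P ih =>
      rw [show smulS (p :: P) = [⟨p.c, p.a + 2, p.b, p.d⟩, ⟨p.c, p.a, p.b + 2, p.d⟩,
        ⟨p.c, p.a, p.b, p.d + 2⟩] ++ smulS P from rfl, Pev_append, ih, Pev_cons]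
      simp only [Pev_cons, Pev_nil, pev, s]
      ring

lemma Pev_iterS (k : ℕ) (P : List PTm) (y x : E3) :
    Pev (smulS^[k] P) y x = s y x ^ k * Pev P y x := by
  induction k with
  | zero => simp
  | succ k ih => rw [Function.iterate_succ_apply', Pev_smulS, ih, pow_succ]; ring

lemma ev_toPoly (M : ℕ) (t : Tm) (hm : t.m ≤ M) (y : E3) {x : E3} (hx : x ≠ y) :
    ev t y x = Pev (toPoly M t) y x / (‖x - y‖ * s y x ^ M) := by
  have hr := norm_pos' hx
  have hs := s_pos hx
  have key : s y x ^ (M - t.m) * s y x ^ t.m = s y x ^ M := by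
    rw [← pow_add, Nat.sub_add_cancel hm]
  rw [toPoly, Pev_iterS, ev, Pev_cons, Pev_nil, pev]
  rw [div_eq_div_iff (by positivity) (by positivity)]
  rw [← key]
  ring

lemma evL_toP (M : ℕ) (L : List Tm) (hm : ∀ t ∈ L, t.m ≤ M) (y : E3) {x : E3} (hx : x ≠ y) :
    evL L y x = Pev (toP M L) y x / (‖x - y‖ * s y x ^ M) := by
  induction L with
  | nil => simp [evL_nil, toP, Pev_nil]
  | cons t L ih =>
      rw [evL_cons, show toP M (t :: L) = toPoly M t ++ toP M L from by simp [toP], Pev_append,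
        ih (fun t ht => hm t (List.mem_cons_of_mem _ ht)),
        ev_toPoly M t (hm t List.mem_cons_self) y hx, ← add_div]

lemma evL_eq_of_nf (M : ℕ) (L1 L2 : List Tm) (h1 : ∀ t ∈ L1, t.m ≤ M) (h2 : ∀ t ∈ L2, t.m ≤ M)
    (hnf : nf M L1 = nf M L2) (y : E3) {x : E3} (hx : x ≠ y) :
    evL L1 y x = evL L2 y x := by
  rw [evL_toP M L1 h1 y hx, evL_toP M L2 h2 y hx,
    ← Pev_normP (toP M L1), ← Pev_pruneP (normP (toP M L1)),
    ← Pev_normP (toP M L2), ← Pev_pruneP (normP (toP M L2))]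
  rw [show pruneP (normP (toP M L1)) = nf M L1 from rfl, show pruneP (normP (toP M L2)) = nf M L2 from rfl, hnf]

lemma evL_zero_of_nf (M : ℕ) (L : List Tm) (h1 : ∀ t ∈ L, t.m ≤ M)
    (hnf : nf M L = []) (y : E3) {x : E3} (hx : x ≠ y) :
    evL L y x = 0 := by
  rw [evL_toP M L h1 y hx, ← Pev_normP (toP M L), ← Pev_pruneP (normP (toP M L))]
  rw [show pruneP (normP (toP M L)) = nf M L from rfl, hnf]
  simp [Pev_nil]


def A' (L : List Tm) : List Tm := flipL (lapL (flipL L))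

def good (A N : List Tm) : Prop :=
  (∀ t ∈ lapL A, t.m ≤ 3) ∧ (∀ t ∈ A' A, t.m ≤ 3) ∧ (∀ t ∈ N, t.m ≤ 3) ∧
  nf 3 (A' A) = nf 3 N ∧ nf 3 (lapL A) = nf 3 N ∧
  (∀ t ∈ lapL N, t.m ≤ 4) ∧ nf 4 (lapL N) = []

instance (A N : List Tm) : Decidable (good A N) := by
  unfold good
  infer_instance

lemma helper (F : E3 → E3 → ℝ) (c0 c1 c2 : ℝ) (A0 A1 A2 N0 N1 N2 : List Tm)
    (hg0 : good A0 N0) (hg1 : good A1 N1) (hg2 : good A2 N2)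
    (hrep : ∀ x y : E3, x ≠ y → F x y = c0 * evL A0 y x + c1 * evL A1 y x + c2 * evL A2 y x)
    (y : E3) {x : E3} (hx : x ≠ y) :
    lap (fun x' => F x' y) x = c0 * evL (lapL A0) y x + c1 * evL (lapL A1) y x + c2 * evL (lapL A2) y x ∧
    lap (fun y' => F x y') y = c0 * evL (lapL A0) y x + c1 * evL (lapL A1) y x + c2 * evL (lapL A2) y x ∧
    lap (fun x' => lap (fun y' => F x' y') y) x = 0 := by
  have hyx : y ≠ x := hx.symm
  -- (1)
  have part1 : lap (fun x' => F x' y) x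
      = c0 * evL (lapL A0) y x + c1 * evL (lapL A1) y x + c2 * evL (lapL A2) y x := by
    have he : (fun x' => F x' y) =ᶠ[nhds x]
        (fun x' => c0 * evL A0 y x' + c1 * evL A1 y x' + c2 * evL A2 y x') :=
      (eventually_ne y hx).mono (fun z hz => hrep z y hz)
    rw [lap_congr he, lap_comb c0 c1 c2 A0 A1 A2 y hx]
  -- (2') inner laplacian in y, for any x' ≠ y, expressed via N lists
  have part2' : ∀ x' : E3, x' ≠ y →
      lap (fun y' => F x' y') y = c0 * evL N0 y x' + c1 * evL N1 y x' + c2 * evL N2 y x' := by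
    intro x' hx'
    have he : (fun y' => F x' y') =ᶠ[nhds y]
        (fun y' => c0 * evL (flipL A0) x' y' + c1 * evL (flipL A1) x' y' + c2 * evL (flipL A2) x' y') := by
      refine (eventually_ne x' hx'.symm).mono (fun z hz => ?_)
      show F x' z = _
      rw [hrep x' z (Ne.symm hz), evL_flip A0, evL_flip A1, evL_flip A2]
    rw [lap_congr he, lap_comb c0 c1 c2 _ _ _ x' hx'.symm,
      evL_flip (lapL (flipL A0)), evL_flip (lapL (flipL A1)), evL_flip (lapL (flipL A2))]
    rw [show flipL (lapL (flipL A0)) = A' A0 from rfl, show flipL (lapL (flipL A1)) = A' A1 from rfl,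
      show flipL (lapL (flipL A2)) = A' A2 from rfl]
    rw [evL_eq_of_nf 3 (A' A0) N0 hg0.2.1 hg0.2.2.1 hg0.2.2.2.1 y hx',
      evL_eq_of_nf 3 (A' A1) N1 hg1.2.1 hg1.2.2.1 hg1.2.2.2.1 y hx',
      evL_eq_of_nf 3 (A' A2) N2 hg2.2.1 hg2.2.2.1 hg2.2.2.2.1 y hx']
  -- (2)
  have part2 : lap (fun y' => F x y') y
      = c0 * evL (lapL A0) y x + c1 * evL (lapL A1) y x + c2 * evL (lapL A2) y x := by
    rw [part2' x hx,
      ← evL_eq_of_nf 3 (lapL A0) N0 hg0.1 hg0.2.2.1 hg0.2.2.2.2.1 y hx,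
      ← evL_eq_of_nf 3 (lapL A1) N1 hg1.1 hg1.2.2.1 hg1.2.2.2.2.1 y hx,
      ← evL_eq_of_nf 3 (lapL A2) N2 hg2.1 hg2.2.2.1 hg2.2.2.2.2.1 y hx]
  -- (3)
  have part3 : lap (fun x' => lap (fun y' => F x' y') y) x = 0 := by
    have he : (fun x' => lap (fun y' => F x' y') y) =ᶠ[nhds x]
        (fun x' => c0 * evL N0 y x' + c1 * evL N1 y x' + c2 * evL N2 y x') :=
      (eventually_ne y hx).mono (fun z hz => part2' z hz)
    rw [lap_congr he, lap_comb c0 c1 c2 N0 N1 N2 y hx,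
      evL_zero_of_nf 4 (lapL N0) hg0.2.2.2.2.2.1 hg0.2.2.2.2.2.2 y hx,
      evL_zero_of_nf 4 (lapL N1) hg1.2.2.2.2.2.1 hg1.2.2.2.2.2.2 y hx,
      evL_zero_of_nf 4 (lapL N2) hg2.2.2.2.2.2.1 hg2.2.2.2.2.2.2 y hx]
    ring
  exact ⟨part1, part2, part3⟩

def L00 : List Tm := [⟨1,0,0,0,0⟩, ⟨1,2,0,0,1⟩]
def L01 : List Tm := [⟨1,1,1,0,1⟩]
def L02 : List Tm := [⟨1,1,0,1,1⟩]
def L11 : List Tm := [⟨1,0,0,0,0⟩, ⟨1,0,2,0,1⟩]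
def L12 : List Tm := [⟨1,0,1,1,1⟩]
def L22 : List Tm := [⟨1,0,0,0,0⟩, ⟨1,0,0,2,1⟩]
def N00 : List Tm := [⟨2,0,0,0,1⟩, ⟨-6,2,0,0,2⟩]
def N01 : List Tm := [⟨-6,1,1,0,2⟩]
def N02 : List Tm := [⟨-6,1,0,1,2⟩]
def N11 : List Tm := [⟨2,0,0,0,1⟩, ⟨-6,0,2,0,2⟩]
def N12 : List Tm := [⟨-6,0,1,1,2⟩]
def N22 : List Tm := [⟨2,0,0,0,1⟩, ⟨-6,0,0,2,2⟩]

set_option maxRecDepth 100000 in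
set_option maxHeartbeats 2000000 in
lemma good00 : good L00 N00 := by decide
set_option maxRecDepth 100000 in
set_option maxHeartbeats 2000000 in
lemma good01 : good L01 N01 := by decide
set_option maxRecDepth 100000 in
set_option maxHeartbeats 2000000 in
lemma good02 : good L02 N02 := by decide
set_option maxRecDepth 100000 in
set_option maxHeartbeats 2000000 in
lemma good11 : good L11 N11 := by decide
set_option maxRecDepth 100000 in
set_option maxHeartbeats 2000000 in
lemma good12 : good L12 N12 := by decide
set_option maxRecDepth 100000 in
set_option maxHeartbeats 2000000 in
lemma good22 : good L22 N22 := by decide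



def Lrow : Fin 3 → Fin 3 → List Tm := ![![L00, L01, L02], ![L01, L11, L12], ![L02, L12, L22]]
def Nrow : Fin 3 → Fin 3 → List Tm := ![![N00, N01, N02], ![N01, N11, N12], ![N02, N12, N22]]

lemma goodrow (i j : Fin 3) : good (Lrow i j) (Nrow i j) := by
  fin_cases i <;> fin_cases j <;>
    simp only [Lrow, Nrow, Matrix.cons_val_zero, Matrix.cons_val_one, Matrix.head_cons,
      Matrix.cons_val_two, Matrix.tail_cons] <;>
    first
      | exact good00 | exact good01 | exact good02
      | exact good11 | exact good12 | exact good22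

lemma hrep (f : Fin 3 → ℝ) (i : Fin 3) : ∀ x y : E3, x ≠ y →
    (∑ j : Fin 3, J x y i j * f j)
      = (f 0 / (8 * Real.pi)) * evL (Lrow i 0) y x
        + (f 1 / (8 * Real.pi)) * evL (Lrow i 1) y x
        + (f 2 / (8 * Real.pi)) * evL (Lrow i 2) y x := by
  intro x y hx
  have hr := norm_pos' hx
  have hpi := Real.pi_ne_zero
  rw [Fin.sum_univ_three]
  have hi : i = 0 ∨ i = 1 ∨ i = 2 := by
    rcases i with ⟨v, hv⟩
    simp only [Fin.ext_iff, Fin.val_zero, Fin.val_one, Fin.val_two]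
    omega
  rcases hi with rfl | rfl | rfl <;>
  · simp only [Lrow, Matrix.cons_val_zero, Matrix.cons_val_one, Matrix.head_cons,
      Matrix.cons_val_two, Matrix.tail_cons, J, evL, ev, L00, L01, L02, L11, L12, L22,
      List.map, List.sum_cons, List.sum_nil, s_eq,
      show (⟨0, by norm_num⟩ : Fin 3) = 0 from rfl,
      show (⟨1, by norm_num⟩ : Fin 3) = 1 from rfl,
      show (⟨2, by norm_num⟩ : Fin 3) = 2 from rfl]
    norm_num [Fin.ext_iff]
    field_simp


end RPY

open RPY

/-- The free-space RPY bi-Laplacian term vanishes, so the RPY velocity simplifies. -/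
theorem stmt19 (y : E3) (a b : ℝ) (ha : 0 < a) (hb : 0 < b) (f : Fin 3 → ℝ) :
    ∀ x : E3, x ≠ y → ∀ i : Fin 3,
      lap (fun x => lap (fun y => ∑ j : Fin 3, J x y i j * f j) y) x = 0 ∧
      ((∑ j : Fin 3, J x y i j * f j)
        + (a ^ 2 / 6) * lap (fun x => ∑ j : Fin 3, J x y i j * f j) x
        + (b ^ 2 / 6) * lap (fun y => ∑ j : Fin 3, J x y i j * f j) y
        + (a ^ 2 / 6) * (b ^ 2 / 6)
          * lap (fun x => lap (fun y => ∑ j : Fin 3, J x y i j * f j) y) x)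
      = (∑ j : Fin 3, J x y i j * f j)
        + ((a ^ 2 + b ^ 2) / 6) * lap (fun x => ∑ j : Fin 3, J x y i j * f j) x := by
  intro x hx i
  obtain ⟨h1, h2, h3⟩ :
      (lap (fun x => ∑ j : Fin 3, J x y i j * f j) x
        = (f 0 / (8 * Real.pi)) * evL (lapL (Lrow i 0)) y x
          + (f 1 / (8 * Real.pi)) * evL (lapL (Lrow i 1)) y x
          + (f 2 / (8 * Real.pi)) * evL (lapL (Lrow i 2)) y x) ∧
      (lap (fun y => ∑ j : Fin 3, J x y i j * f j) y
        = (f 0 / (8 * Real.pi)) * evL (lapL (Lrow i 0)) y x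
          + (f 1 / (8 * Real.pi)) * evL (lapL (Lrow i 1)) y x
          + (f 2 / (8 * Real.pi)) * evL (lapL (Lrow i 2)) y x) ∧
      (lap (fun x => lap (fun y => ∑ j : Fin 3, J x y i j * f j) y) x = 0) :=
    helper (fun x y => ∑ j : Fin 3, J x y i j * f j)
      (f 0 / (8 * Real.pi)) (f 1 / (8 * Real.pi)) (f 2 / (8 * Real.pi))
      (Lrow i 0) (Lrow i 1) (Lrow i 2) (Nrow i 0) (Nrow i 1) (Nrow i 2)
      (goodrow i 0) (goodrow i 1) (goodrow i 2) (hrep f i) y hx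
  refine ⟨h3, ?_⟩
  rw [h1, h2, h3]
  ring
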